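/- The complement of strong bisimilarity is a symmetric relation satisfying the apartness rule, i.e., it is an apartness relation; hence apartness is contained in the complement of bisimilarity. -/
import Mathlib


/-- A symmetric relation `R` is a strong bisimulation on the LTS `(X, A, tr)`. -/
def IsBisimulation {X A : Type} (tr : X → A → X → Prop) (R : X → X → Prop) : Prop :=
  Symmetric R ∧ ∀ x y, R x y → ∀ a x', tr x a x' → ∃ y', tr y a y' ∧ R x' y'

/-- Strong bisimilarity: the union of all strong bisimulations. -/
def Bisimilar {X A : Type} (tr : X → A → X → Prop) (x y : X) : Prop :=
  ∃ R, IsBisimulation tr R ∧ R x y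

/-- A symmetric relation `R` is an apartness relation on the LTS `(X, A, tr)`. -/
def IsApartnessRel {X A : Type} (tr : X → A → X → Prop) (R : X → X → Prop) : Prop :=
  Symmetric R ∧ ∀ x y a x', tr x a x' → (∀ y', tr y a y' → R x' y') → R x y

/-- Apartness: the intersection of all apartness relations. -/
def Apart {X A : Type} (tr : X → A → X → Prop) (x y : X) : Prop :=
  ∀ R, IsApartnessRel tr R → R x y

/-- An LTS is image-finite if every state has finitely many `a`-successors, for each `a`. -/
def ImageFinite {X A : Type} (tr : X → A → X → Prop) : Prop :=
  ∀ x a, {x' | tr x a x'}.Finite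

theorem not_bisimilar_isApartnessRel {X A : Type} (tr : X → A → X → Prop) :
    IsApartnessRel tr (fun x y => ¬ Bisimilar tr x y) ∧
      ∀ x y, Apart tr x y → ¬ Bisimilar tr x y := by
  have hap : IsApartnessRel tr (fun x y => ¬ Bisimilar tr x y) := by
    constructor
    · intro x y hxy ⟨R, hR, hRyx⟩
      exact hxy ⟨R, hR, hR.1 hRyx⟩
    · intro x y a x' htr hall ⟨R, hR, hRxy⟩
      obtain ⟨y', hy', hRx'y'⟩ := hR.2 x y hRxy a x' htr
      exact hall y' hy' ⟨R, hR, hRx'y'⟩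
  exact ⟨hap, fun x y h => h _ hap⟩
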